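/- Let U : [−1,1] → ℝ be strictly increasing, concave, and differentiable on [0,1], with U'(0) < ∞ and U'(1) > 0, and set κ = U'(0)/U'(1). Let r̂ ∈ [0,1]ⁿ with r̂₁ ≥ ⋯ ≥ r̂ₙ maximize S(r₁,…,rₙ) = Σ_{1≤i<j≤n} U(r_i − r_j) over [0,1]ⁿ. Then r̂_k = 1 for every integer k with 1 ≤ k ≤ n/(κ+1); in particular the empirical measure P̂ₙ = (1/n)Σ_{i=1}^n δ_{r̂_i} satisfies P̂ₙ({1}) ≥ ⌊n/(κ+1)⌋/n. -/

import Mathlib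

open MeasureTheory Set Finset

section aux
open Set Filter Topology

lemma slope_bd {U U' : ℝ → ℝ}
    (hUconc : ConcaveOn ℝ (Set.Icc (-1 : ℝ) 1) U)
    (hderiv : ∀ x ∈ Set.Icc (0 : ℝ) 1, HasDerivWithinAt U (U' x) (Set.Icc (0 : ℝ) 1) x)
    {a b : ℝ} (ha : 0 ≤ a) (hab : a < b) (hb : b ≤ 1) :
    U' b * (b - a) ≤ U b - U a ∧ U b - U a ≤ U' a * (b - a) := by
  have hconv : ConvexOn ℝ (Set.Icc (0:ℝ) 1) (-U) :=
    (hUconc.subset (Set.Icc_subset_Icc (by norm_num) le_rfl) (convex_Icc 0 1)).neg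
  have haI : a ∈ Set.Icc (0:ℝ) 1 := ⟨ha, hab.le.trans hb⟩
  have hbI : b ∈ Set.Icc (0:ℝ) 1 := ⟨ha.trans hab.le, hb⟩
  have hba0 : b - a ≠ 0 := sub_ne_zero.mpr hab.ne'
  have hsub : Set.Ioo a b ⊆ Set.Icc (0:ℝ) 1 \ {b} := fun y hy =>
    ⟨⟨ha.trans hy.1.le, hy.2.le.trans hb⟩, fun h => absurd (h ▸ hy.2) (lt_irrefl _)⟩
  have hsub' : Set.Ioo a b ⊆ Set.Icc (0:ℝ) 1 \ {a} := fun y hy =>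
    ⟨⟨ha.trans hy.1.le, hy.2.le.trans hb⟩, fun h => absurd (h ▸ hy.1) (lt_irrefl _)⟩
  have hneB : (𝓝[Set.Ioo a b] b).NeBot := by
    rw [← mem_closure_iff_nhdsWithin_neBot, closure_Ioo hab.ne]
    exact ⟨hab.le, le_rfl⟩
  have hneA : (𝓝[Set.Ioo a b] a).NeBot := by
    rw [← mem_closure_iff_nhdsWithin_neBot, closure_Ioo hab.ne]
    exact ⟨le_rfl, hab.le⟩
  constructor
  · have htb : Tendsto (slope U b) (𝓝[Set.Ioo a b] b) (𝓝 (U' b)) :=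
      (hasDerivWithinAt_iff_tendsto_slope.mp (hderiv b hbI)).mono_left
        (nhdsWithin_mono b hsub)
    have hle : U' b ≤ (U a - U b) / (a - b) := by
      refine le_of_tendsto htb ?_
      filter_upwards [self_mem_nhdsWithin] with y hy
      have h := hconv.secant_mono hbI haI ⟨ha.trans hy.1.le, hy.2.le.trans hb⟩
        hab.ne (ne_of_lt hy.2) hy.1.le
      simp only [Pi.neg_apply, neg_sub_neg] at h
      rw [slope_def_field]
      rw [show (U y - U b)/(y-b) = -((U b - U y)/(y-b)) by rw [← neg_div, neg_sub],
        show (U a - U b)/(a-b) = -((U b - U a)/(a-b)) by rw [← neg_div, neg_sub]]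
      linarith
    have h2 : (U a - U b)/(a - b) = (U b - U a)/(b - a) := by
      rw [← neg_div_neg_eq]; ring_nf
    rw [h2] at hle
    calc U' b * (b - a) ≤ (U b - U a)/(b-a) * (b - a) :=
          mul_le_mul_of_nonneg_right hle (by linarith)
      _ = U b - U a := by field_simp
  · have hta : Tendsto (slope U a) (𝓝[Set.Ioo a b] a) (𝓝 (U' a)) :=
      (hasDerivWithinAt_iff_tendsto_slope.mp (hderiv a haI)).mono_left
        (nhdsWithin_mono a hsub')
    have hle : (U b - U a) / (b - a) ≤ U' a := by
      refine ge_of_tendsto hta ?_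
      filter_upwards [self_mem_nhdsWithin] with y hy
      have h := hconv.secant_mono haI ⟨ha.trans hy.1.le, hy.2.le.trans hb⟩ hbI
        (ne_of_gt hy.1) hab.ne' hy.2.le
      simp only [Pi.neg_apply, neg_sub_neg] at h
      rw [slope_def_field]
      rw [show (U y - U a)/(y-a) = -((U a - U y)/(y-a)) by rw [← neg_div, neg_sub],
        show (U b - U a)/(b-a) = -((U a - U b)/(b-a)) by rw [← neg_div, neg_sub]]
      linarith
    calc U b - U a = (U b - U a)/(b-a) * (b - a) := by field_simp
      _ ≤ U' a * (b - a) := mul_le_mul_of_nonneg_right hle (by linarith)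

lemma Uprime_anti {U U' : ℝ → ℝ}
    (hUconc : ConcaveOn ℝ (Set.Icc (-1 : ℝ) 1) U)
    (hderiv : ∀ x ∈ Set.Icc (0 : ℝ) 1, HasDerivWithinAt U (U' x) (Set.Icc (0 : ℝ) 1) x)
    {a b : ℝ} (ha : 0 ≤ a) (hab : a ≤ b) (hb : b ≤ 1) : U' b ≤ U' a := by
  rcases eq_or_lt_of_le hab with rfl | h
  · exact le_rfl
  · obtain ⟨h1, h2⟩ := slope_bd hUconc hderiv ha h hb
    have : 0 < b - a := by linarith
    nlinarith

lemma arith1 {U0 U1 K Mr nr : ℝ} (hU1 : 0 < U1) (hU01 : U1 ≤ U0) (hMk : Mr ≤ K)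
    (h0M : 0 ≤ Mr) (hkn : (K + 1) * (U0 / U1 + 1) ≤ nr) :
    Mr * U0 < (nr - 1 - K) * U1 := by
  have hdiv : U0 / U1 * U1 = U0 := div_mul_cancel₀ _ (ne_of_gt hU1)
  have hU0 : 0 < U0 := lt_of_lt_of_le hU1 hU01
  have h2 : (K + 1) * U0 ≤ (nr - 1 - K) * U1 := by nlinarith
  nlinarith

lemma arith2 {c1 c2 c3 ε U0 U1 : ℝ} (hε : 0 < ε) (hKM : 0 < c1)
    (hMU : c3 * U0 < c2 * U1) :
    0 < c1 * (c2 * (ε * U1)) + c3 * (c1 * (-(ε * U0))) := by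
  nlinarith [mul_pos (mul_pos hKM hε) (sub_pos.mpr hMU)]

end aux

/-- If `U` is strictly increasing, concave and differentiable on `[0,1]`
with derivative `U'` satisfying `U'(1) > 0`, `κ = U'(0)/U'(1)`, and the nonincreasing
`r ∈ [0,1]^n` maximizes `S`, then `r_k = 1` for every `1 ≤ k ≤ n/(κ+1)`; in particular
the empirical measure puts mass at least `⌊n/(κ+1)⌋/n` on `{1}`. -/
theorem stmt12 (n : ℕ) (hn : 2 ≤ n) (U U' : ℝ → ℝ)
    (hUmono : StrictMonoOn U (Set.Icc (-1 : ℝ) 1))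
    (hUconc : ConcaveOn ℝ (Set.Icc (-1 : ℝ) 1) U)
    (hderiv : ∀ x ∈ Set.Icc (0 : ℝ) 1, HasDerivWithinAt U (U' x) (Set.Icc (0 : ℝ) 1) x)
    (hU'1 : 0 < U' 1)
    (r : Fin n → ℝ) (hr : ∀ i, r i ∈ Set.Icc (0 : ℝ) 1)
    (hrmono : ∀ i j : Fin n, i ≤ j → r j ≤ r i)
    (hropt : ∀ s : Fin n → ℝ, (∀ i, s i ∈ Set.Icc (0 : ℝ) 1) →
      (∑ i : Fin n, ∑ j ∈ Finset.Ioi i, U (s i - s j)) ≤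
        ∑ i : Fin n, ∑ j ∈ Finset.Ioi i, U (r i - r j)) :
    (∀ k : Fin n, ((k : ℕ) + 1 : ℝ) ≤ n / (U' 0 / U' 1 + 1) → r k = 1) ∧
      ENNReal.ofReal ((⌊(n : ℝ) / (U' 0 / U' 1 + 1)⌋ : ℝ) / n) ≤
        ((n : ENNReal)⁻¹ • ∑ i : Fin n, Measure.dirac (r i)) {1} := by
  have hU'01 : U' 1 ≤ U' 0 :=
    Uprime_anti hUconc hderiv le_rfl zero_le_one le_rfl
  have hU'0pos : 0 < U' 0 := lt_of_lt_of_le hU'1 hU'01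
  have hκ1 : (1:ℝ) ≤ U' 0 / U' 1 := (one_le_div hU'1).mpr hU'01
  have hκpos : (0:ℝ) < U' 0 / U' 1 + 1 := by linarith
  have part1 : ∀ k : Fin n, ((k : ℕ) + 1 : ℝ) ≤ n / (U' 0 / U' 1 + 1) → r k = 1 := by
    intro k hk
    by_contra hne
    have hrk1 : r k < 1 := lt_of_le_of_ne (hr k).2 hne
    have hex : ∃ j, ∃ h : j < n, r ⟨j, h⟩ < 1 := ⟨k.val, k.isLt, by simpa using hrk1⟩
    obtain ⟨M, hMn, hMk, hrM', hmin⟩ :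
        ∃ M : ℕ, M < n ∧ M ≤ k.val ∧ (∀ h : M < n, r ⟨M, h⟩ < 1) ∧
          ∀ i : Fin n, i.val < M → r i = 1 := by
      refine ⟨Nat.find hex, ?_, ?_, ?_, ?_⟩
      · exact (Nat.find_spec hex).1
      · exact Nat.find_le ⟨k.isLt, by simpa using hrk1⟩
      · intro h
        obtain ⟨h', hh⟩ := Nat.find_spec hex
        exact hh
      · intro i hi
        have h1 := Nat.find_min hex hi
        push_neg at h1
        have h2 := h1 i.isLt
        have h3 : ¬ r i < 1 := by simpa using h2
        exact le_antisymm (hr i).2 (not_lt.mp h3)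
    set m : Fin n := ⟨M, hMn⟩ with hmdef
    have hrm : r m < 1 := hrM' hMn
    set ε : ℝ := 1 - r m with hεdef
    have hε0 : 0 < ε := by simp only [hεdef]; linarith
    have hrle : ∀ i : Fin n, M ≤ i.val → r i ≤ r m := fun i hi =>
      hrmono m i (Fin.le_def.mpr hi)
    set s : Fin n → ℝ := fun i => if M ≤ i.val ∧ i.val ≤ k.val then r i + ε else r i
      with hsdef
    have hsmem : ∀ i, s i ∈ Set.Icc (0:ℝ) 1 := by
      intro i
      simp only [hsdef]
      split_ifs with h
      · refine ⟨by linarith [(hr i).1], ?_⟩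
        have := hrle i h.1
        simp only [hεdef]; linarith
      · exact hr i
    set A : Finset (Fin n) := Finset.Icc m k with hAdef
    set G : Finset (Fin n) := Finset.Ioi k with hGdef
    set B : Finset (Fin n) := Finset.Iio m with hBdef
    have hmemA : ∀ i : Fin n, i ∈ A ↔ M ≤ i.val ∧ i.val ≤ k.val := by
      intro i
      rw [hAdef, Finset.mem_Icc, Fin.le_def, Fin.le_def]
    have hmemG : ∀ j : Fin n, j ∈ G ↔ k.val < j.val := by
      intro j
      rw [hGdef, Finset.mem_Ioi, Fin.lt_def]
    have hmemB : ∀ i : Fin n, i ∈ B ↔ i.val < M := by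
      intro i
      rw [hBdef, Finset.mem_Iio, Fin.lt_def]
    set ga : ℝ := ε * U' 1 with hgadef
    set lb : ℝ := ε * U' 0 with hlbdef
    -- pointwise bound
    have hpt : ∀ i j : Fin n, i < j →
        ((if i ∈ A ∧ j ∈ G then ga else 0) + (if i ∈ B ∧ j ∈ A then -lb else 0)) ≤
          U (s i - s j) - U (r i - r j) := by
      intro i j hij
      by_cases h1 : i ∈ A ∧ j ∈ G
      · have hiA := (hmemA i).mp h1.1
        have hjG := (hmemG j).mp h1.2
        have hnB : ¬ (i ∈ B ∧ j ∈ A) := by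
          rintro ⟨-, hjA⟩
          exact absurd ((hmemA j).mp hjA).2 (not_le.mpr hjG)
        rw [if_pos h1, if_neg hnB, add_zero]
        have hsi : s i = r i + ε := by simp only [hsdef]; rw [if_pos hiA]
        have hsj : s j = r j := by
          simp only [hsdef]; rw [if_neg]; rintro ⟨-, h⟩; omega
        have hij' : r j ≤ r i := hrmono i j hij.le
        have ha0 : 0 ≤ r i - r j := by linarith
        have hb1 : r i - r j + ε ≤ 1 := by
          have := hrle i hiA.1
          have := (hr j).1
          simp only [hεdef] at *; linarith
        have hsb := (slope_bd hUconc hderiv (a := r i - r j) (b := r i - r j + ε)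
          ha0 (by linarith) hb1).1
        have hanti : U' 1 ≤ U' (r i - r j + ε) :=
          Uprime_anti hUconc hderiv (by linarith) hb1 le_rfl
        have : s i - s j = r i - r j + ε := by rw [hsi, hsj]; ring
        rw [this]
        have hgale : ga ≤ U' (r i - r j + ε) * ε := by
          simp only [hgadef]
          calc ε * U' 1 ≤ ε * U' (r i - r j + ε) :=
              mul_le_mul_of_nonneg_left hanti hε0.le
            _ = U' (r i - r j + ε) * ε := mul_comm _ _
        have : U' (r i - r j + ε) * (r i - r j + ε - (r i - r j)) =
            U' (r i - r j + ε) * ε := by ring_nf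
        linarith [hsb, hgale, this ▸ hsb]
      · by_cases h2 : i ∈ B ∧ j ∈ A
        · have hiB := (hmemB i).mp h2.1
          have hjA := (hmemA j).mp h2.2
          rw [if_neg h1, if_pos h2, zero_add]
          have hri : r i = 1 := hmin i hiB
          have hsi : s i = r i := by
            simp only [hsdef]; rw [if_neg]; rintro ⟨h, -⟩; omega
          have hsj : s j = r j + ε := by simp only [hsdef]; rw [if_pos hjA]
          have hj1 : r j ≤ r m := hrle j hjA.1
          have ha0 : 0 ≤ 1 - r j - ε := by simp only [hεdef] at *; linarith
          have hb1 : 1 - r j ≤ 1 := by linarith [(hr j).1]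
          have hsb := (slope_bd hUconc hderiv (a := 1 - r j - ε) (b := 1 - r j)
            ha0 (by linarith) hb1).2
          have hanti : U' (1 - r j - ε) ≤ U' 0 :=
            Uprime_anti hUconc hderiv le_rfl ha0 (by linarith [(hr j).1, hε0])
          have he1 : s i - s j = 1 - r j - ε := by rw [hsi, hsj, hri]; ring
          have he2 : r i - r j = 1 - r j := by rw [hri]
          rw [he1, he2]
          have : U' (1 - r j - ε) * (1 - r j - (1 - r j - ε)) =
              U' (1 - r j - ε) * ε := by ring_nf
          have hle2 : U (1 - r j) - U (1 - r j - ε) ≤ U' 0 * ε := by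
            calc U (1 - r j) - U (1 - r j - ε) ≤ U' (1 - r j - ε) * (1 - r j - (1 - r j - ε)) := hsb
              _ = U' (1 - r j - ε) * ε := this
              _ ≤ U' 0 * ε := mul_le_mul_of_nonneg_right hanti hε0.le
          simp only [hlbdef]; linarith
        · rw [if_neg h1, if_neg h2, add_zero]
          have heq : s i - s j = r i - r j := by
            by_cases hiA : M ≤ i.val ∧ i.val ≤ k.val
            · by_cases hjA : M ≤ j.val ∧ j.val ≤ k.val
              · simp only [hsdef]; rw [if_pos hiA, if_pos hjA]; ring
              · exfalso
                apply h1
                refine ⟨(hmemA i).mpr hiA, (hmemG j).mpr ?_⟩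
                have : M ≤ j.val := le_trans hiA.1 (le_of_lt hij)
                omega
            · by_cases hjA : M ≤ j.val ∧ j.val ≤ k.val
              · exfalso
                apply h2
                refine ⟨(hmemB i).mpr ?_, (hmemA j).mpr hjA⟩
                have : i.val < j.val := hij
                omega
              · simp only [hsdef]; rw [if_neg hiA, if_neg hjA]
          rw [heq, sub_self]
    -- sum bound
    have htot : (∑ i : Fin n, ∑ j ∈ Finset.Ioi i,
          ((if i ∈ A ∧ j ∈ G then ga else 0) + (if i ∈ B ∧ j ∈ A then -lb else 0))) ≤
        ∑ i : Fin n, ∑ j ∈ Finset.Ioi i, (U (s i - s j) - U (r i - r j)) := by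
      refine Finset.sum_le_sum fun i _ => Finset.sum_le_sum fun j hj => ?_
      exact hpt i j (Finset.mem_Ioi.mp hj)
    -- compute LHS
    have e1 : ∀ i : Fin n, (∑ j ∈ Finset.Ioi i, if i ∈ A ∧ j ∈ G then ga else 0) =
        if i ∈ A then (G.card : ℝ) * ga else 0 := by
      intro i
      by_cases hi : i ∈ A
      · simp only [hi, true_and, if_true]
        have hGsub : G ⊆ Finset.Ioi i := by
          intro j hj
          have h1 : k.val < j.val := by
            rw [hmemG j] at hj
            exact hj
          have h2 : i.val ≤ k.val := ((hmemA i).mp hi).2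
          exact Finset.mem_Ioi.mpr (Fin.lt_def.mpr (by omega))
        rw [Finset.sum_ite_mem, Finset.inter_eq_right.mpr hGsub, Finset.sum_const,
          nsmul_eq_mul]
      · simp [hi]
    have e2 : ∀ i : Fin n, (∑ j ∈ Finset.Ioi i, if i ∈ B ∧ j ∈ A then -lb else 0) =
        if i ∈ B then (A.card : ℝ) * (-lb) else 0 := by
      intro i
      by_cases hi : i ∈ B
      · simp only [hi, true_and, if_true]
        have hAsub : A ⊆ Finset.Ioi i := by
          intro j hj
          rw [Finset.mem_Ioi]
          have h1 : i.val < M := (hmemB i).mp hi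
          have h2 : M ≤ j.val := ((hmemA j).mp hj).1
          exact Fin.lt_def.mpr (by omega)
        rw [Finset.sum_ite_mem, Finset.inter_eq_right.mpr hAsub, Finset.sum_const,
          nsmul_eq_mul]
      · simp [hi]
    have hLHS : (∑ i : Fin n, ∑ j ∈ Finset.Ioi i,
          ((if i ∈ A ∧ j ∈ G then ga else 0) + (if i ∈ B ∧ j ∈ A then -lb else 0))) =
        (A.card : ℝ) * ((G.card : ℝ) * ga) + (B.card : ℝ) * ((A.card : ℝ) * (-lb)) := by
      have : ∀ i : Fin n, (∑ j ∈ Finset.Ioi i,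
          ((if i ∈ A ∧ j ∈ G then ga else 0) + (if i ∈ B ∧ j ∈ A then -lb else 0))) =
          (if i ∈ A then (G.card : ℝ) * ga else 0) +
          (if i ∈ B then (A.card : ℝ) * (-lb) else 0) := by
        intro i
        rw [Finset.sum_add_distrib, e1 i, e2 i]
      rw [Finset.sum_congr rfl fun i _ => this i, Finset.sum_add_distrib]
      congr 1
      · rw [Finset.sum_ite_mem, Finset.univ_inter, Finset.sum_const, nsmul_eq_mul]
      · rw [Finset.sum_ite_mem, Finset.univ_inter, Finset.sum_const, nsmul_eq_mul]
    -- cardinalities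
    have hAcard : ((A.card : ℕ) : ℝ) = (k.val : ℝ) + 1 - M := by
      rw [hAdef, Fin.card_Icc]
      have : m.val = M := rfl
      rw [this, Nat.cast_sub (by omega)]
      push_cast; ring
    have hGcard : ((G.card : ℕ) : ℝ) = (n : ℝ) - 1 - k.val := by
      rw [hGdef, Fin.card_Ioi]
      have hk1 : k.val < n := k.isLt
      rw [Nat.cast_sub (by omega), Nat.cast_sub (by omega)]
      push_cast; ring
    have hBcard : ((B.card : ℕ) : ℝ) = (M : ℝ) := by
      rw [hBdef, Fin.card_Iio]
    -- positivity
    have hkn : ((k.val : ℝ) + 1) * (U' 0 / U' 1 + 1) ≤ n := (le_div_iff₀ hκpos).mp hk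
    have hMkR : (M : ℝ) ≤ (k.val : ℝ) := Nat.cast_le.mpr hMk
    have hMU : (M : ℝ) * U' 0 < ((n:ℝ) - 1 - k.val) * U' 1 :=
      arith1 hU'1 hU'01 hMkR (Nat.cast_nonneg M) hkn
    have hpos : 0 < (A.card : ℝ) * ((G.card : ℝ) * ga) + (B.card : ℝ) * ((A.card : ℝ) * (-lb)) := by
      rw [hAcard, hGcard, hBcard]
      have hKM : 0 < (k.val : ℝ) + 1 - M := by linarith
      rw [hgadef, hlbdef]
      exact arith2 hε0 hKM hMU
    -- contradiction
    have hT0 : (∑ i : Fin n, ∑ j ∈ Finset.Ioi i, (U (s i - s j) - U (r i - r j))) ≤ 0 := by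
      have h := hropt s hsmem
      have : (∑ i : Fin n, ∑ j ∈ Finset.Ioi i, (U (s i - s j) - U (r i - r j))) =
          (∑ i : Fin n, ∑ j ∈ Finset.Ioi i, U (s i - s j)) -
          ∑ i : Fin n, ∑ j ∈ Finset.Ioi i, U (r i - r j) := by
        simp only [Finset.sum_sub_distrib]
      rw [this]; linarith
    rw [hLHS] at htot
    linarith
  refine ⟨part1, ?_⟩
  -- part 2
  set x : ℝ := (n : ℝ) / (U' 0 / U' 1 + 1) with hxdef
  have hx0 : 0 ≤ x := div_nonneg (Nat.cast_nonneg n) hκpos.le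
  have hfl : (0:ℤ) ≤ ⌊x⌋ := Int.floor_nonneg.mpr hx0
  set F : ℕ := ⌊x⌋.toNat with hFdef
  have hFx : (F : ℝ) ≤ x := by
    have h1 : ((⌊x⌋ : ℤ) : ℝ) ≤ x := Int.floor_le x
    have h2 : ((F : ℕ) : ℝ) = ((⌊x⌋ : ℤ) : ℝ) := by
      rw [hFdef]; exact_mod_cast congrArg (Int.cast (R := ℝ)) (Int.toNat_of_nonneg hfl)
    linarith
  have hxn : x ≤ n := by
    rw [hxdef]
    exact div_le_self (Nat.cast_nonneg n) (by linarith)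
  have hFn : F ≤ n := by
    have : (F : ℝ) ≤ (n : ℝ) := le_trans hFx hxn
    exact_mod_cast this
  have hone : ∀ i : Fin n, i.val < F → r i = 1 := by
    intro i hi
    apply part1
    have h1 : (i.val : ℝ) + 1 ≤ F := by exact_mod_cast hi
    linarith
  have hnpos : (0:ℝ) < n := by
    have : 0 < n := by omega
    exact_mod_cast this
  have hmeas : ((n : ENNReal)⁻¹ • ∑ i : Fin n, Measure.dirac (r i)) {1} =
      (n : ENNReal)⁻¹ * ∑ i : Fin n, ({1} : Set ℝ).indicator (1 : ℝ → ENNReal) (r i) := by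
    rw [Measure.smul_apply, smul_eq_mul]
    congr 1
    rw [Measure.finset_sum_apply]
    exact Finset.sum_congr rfl fun i _ => Measure.dirac_apply (r i) {1}
  have hsum_ge : (F : ENNReal) ≤
      ∑ i : Fin n, ({1} : Set ℝ).indicator (1 : ℝ → ENNReal) (r i) := by
    set filt := Finset.univ.filter fun i : Fin n => i.val < F with hfilt
    have hcard : F ≤ filt.card := by
      have h := Finset.card_le_card_of_injOn
        (s := (Finset.univ : Finset (Fin F))) (t := filt)
        (f := fun a : Fin F => (⟨a.val, lt_of_lt_of_le a.isLt hFn⟩ : Fin n))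
        (fun a _ => by
          rw [hfilt, Finset.mem_coe, Finset.mem_filter]
          exact ⟨Finset.mem_univ _, a.isLt⟩)
        (fun a _ b _ hab => Fin.ext (by simpa using hab))
      simpa using h
    have hval : ∀ i ∈ filt, ({1} : Set ℝ).indicator (1 : ℝ → ENNReal) (r i) = 1 := by
      intro i hi
      have : r i = 1 := hone i (by simpa [hfilt] using hi)
      rw [Set.indicator_of_mem (by simp [this])]
      rfl
    calc (F : ENNReal) ≤ (filt.card : ENNReal) := by exact_mod_cast hcard
      _ = ∑ _i ∈ filt, (1 : ENNReal) := by
          rw [Finset.sum_const, nsmul_eq_mul, mul_one]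
      _ = ∑ i ∈ filt, ({1} : Set ℝ).indicator (1 : ℝ → ENNReal) (r i) :=
          (Finset.sum_congr rfl hval).symm
      _ ≤ ∑ i : Fin n, ({1} : Set ℝ).indicator (1 : ℝ → ENNReal) (r i) :=
          Finset.sum_le_sum_of_subset (Finset.filter_subset _ _)
  rw [hmeas]
  have hofr : ENNReal.ofReal ((⌊x⌋ : ℝ) / n) = (F : ENNReal) * (n : ENNReal)⁻¹ := by
    have h1 : ((⌊x⌋ : ℤ) : ℝ) = (F : ℝ) := by
      rw [hFdef]; exact_mod_cast (congrArg (Int.cast (R := ℝ)) (Int.toNat_of_nonneg hfl)).symm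
    rw [h1, ENNReal.ofReal_div_of_pos hnpos, ENNReal.ofReal_natCast,
      ENNReal.ofReal_natCast, div_eq_mul_inv]
  rw [hofr, mul_comm]
  exact mul_le_mul_right hsum_ge _
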